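/- Let 1 < p < q and f : ℝ → ℝ continuous with f(t) = 0 for t ≤ 0, lim_{t→0⁺} f(t)/t^{p-1} = 0, and f(t)/t^{q-1} increasing on (0,∞). Let A, B > 0 and u ≥ 0 measurable with u ≢ 0 and with ∫ f(t u) u dx finite for all t > 0. Then the equation t^{p-1} A + t^{q-1} B = ∫_{ℝᴺ} f(t u) u dx has at most one solution t > 0. -/

import Mathlib

open Real MeasureTheory Filter Topology

theorem stmt17 (N : ℕ) (hN : 1 ≤ N) (p q : ℝ) (hp : 1 < p) (hpq : p < q)
    (f : ℝ → ℝ) (hf : Continuous f) (hf0 : ∀ t ≤ (0 : ℝ), f t = 0)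
    (hlim0 : Tendsto (fun t => f t / t ^ (p - 1)) (𝓝[>] (0 : ℝ)) (𝓝 0))
    (hmono : MonotoneOn (fun t => f t / t ^ (q - 1)) (Set.Ioi 0))
    (A B : ℝ) (hA : 0 < A) (hB : 0 < B)
    (u : EuclideanSpace ℝ (Fin N) → ℝ) (hmeas : Measurable u)
    (hpos : ∀ x, 0 ≤ u x) (hne : ¬ u =ᵐ[volume] 0)
    (hint : ∀ t > (0 : ℝ), Integrable (fun x => f (t * u x) * u x)) :
    ∀ t₁ t₂ : ℝ, 0 < t₁ → 0 < t₂ →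
      t₁ ^ (p - 1) * A + t₁ ^ (q - 1) * B = (∫ x, f (t₁ * u x) * u x) →
      t₂ ^ (p - 1) * A + t₂ ^ (q - 1) * B = (∫ x, f (t₂ * u x) * u x) →
      t₁ = t₂ := by
  -- main step: contradiction from t₁ < t₂ both solutions
  have key : ∀ t₁ t₂ : ℝ, 0 < t₁ → 0 < t₂ → t₁ < t₂ →
      t₁ ^ (p - 1) * A + t₁ ^ (q - 1) * B = (∫ x, f (t₁ * u x) * u x) →
      t₂ ^ (p - 1) * A + t₂ ^ (q - 1) * B = (∫ x, f (t₂ * u x) * u x) → False := by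
    intro t₁ t₂ ht₁ ht₂ hlt h1 h2
    -- pointwise inequality
    have hpt : ∀ x, f (t₁ * u x) * u x / t₁ ^ (q - 1) ≤
        f (t₂ * u x) * u x / t₂ ^ (q - 1) := by
      intro x
      rcases eq_or_lt_of_le (hpos x) with h0 | h0
      · simp [← h0, hf0 0 le_rfl]
      · set c := u x with hc
        have hid : ∀ t : ℝ, 0 < t →
            f (t * c) * c / t ^ (q - 1) = f (t * c) / (t * c) ^ (q - 1) * c ^ q := by
          intro t ht
          have h1 : (t * c) ^ (q - 1) = t ^ (q - 1) * c ^ (q - 1) :=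
            Real.mul_rpow ht.le h0.le
          have h2 : c ^ q = c ^ (q - 1) * c := by
            rw [← Real.rpow_add_one (ne_of_gt h0), sub_add_cancel]
          have htq : (0:ℝ) < t ^ (q - 1) := Real.rpow_pos_of_pos ht _
          have hcq : (0:ℝ) < c ^ (q - 1) := Real.rpow_pos_of_pos h0 _
          rw [h1, h2]
          field_simp
        rw [hid t₁ ht₁, hid t₂ ht₂]
        have hcq : (0:ℝ) < c ^ q := Real.rpow_pos_of_pos h0 _
        have hm := hmono (Set.mem_Ioi.mpr (mul_pos ht₁ h0))
          (Set.mem_Ioi.mpr (mul_pos ht₂ h0))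
          (mul_le_mul_of_nonneg_right hlt.le h0.le)
        exact mul_le_mul_of_nonneg_right hm hcq.le
    -- integral inequality
    have hI : (∫ x, f (t₁ * u x) * u x) / t₁ ^ (q - 1) ≤
        (∫ x, f (t₂ * u x) * u x) / t₂ ^ (q - 1) := by
      rw [← integral_div, ← integral_div]
      exact integral_mono ((hint t₁ ht₁).div_const _) ((hint t₂ ht₂).div_const _) hpt
    rw [← h1, ← h2] at hI
    have hdiv : ∀ t : ℝ, 0 < t →
        (t ^ (p - 1) * A + t ^ (q - 1) * B) / t ^ (q - 1) = t ^ (p - q) * A + B := by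
      intro t ht
      have htq : (0:ℝ) < t ^ (q - 1) := Real.rpow_pos_of_pos ht _
      have : t ^ (p - q) = t ^ (p - 1) / t ^ (q - 1) := by
        rw [← Real.rpow_sub ht]; ring_nf
      rw [this]
      field_simp
    rw [hdiv t₁ ht₁, hdiv t₂ ht₂] at hI
    have h3 : t₂ ^ (p - q) < t₁ ^ (p - q) :=
      Real.rpow_lt_rpow_of_neg ht₁ hlt (by linarith)
    nlinarith
  intro t₁ t₂ ht₁ ht₂ h1 h2
  rcases lt_trichotomy t₁ t₂ with h | h | h
  · exact absurd (key t₁ t₂ ht₁ ht₂ h h1 h2) (by simp)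
  · exact h
  · exact absurd (key t₂ t₁ ht₂ ht₁ h h2 h1) (by simp)
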